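/- Let G be a countable discrete group, X a compact Hausdorff space, and a ∈ C(X) ⋊_r G a normed element with τ a state on C(X) ⋊_r G such that τ|_{C(X)} = δ_x and τ|_{C*_r(G)} is G-invariant. Suppose f ∈ C(X), t ∈ G, and for every ε > 0 there exist s₁, ..., s_m ∈ G and f₁, ..., f_m ∈ C(X) with f_j ≥ 0, ∑_j f_j = 1, and ‖∑_j f_j λ_{s_j} λ_t λ_{s_j⁻¹}‖ < ε. Then τ(f λ_t) = 0. -/

import Mathlib

open scoped ComplexOrder

private lemma state_herm' {A : Type*} [Ring A] [StarRing A] [Algebra ℂ A] [StarModule ℂ A]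
    (τ : A →ₗ[ℂ] ℂ) (hτpos : ∀ a : A, 0 ≤ τ (star a * a)) (a b : A) :
    τ (star b * a) = starRingEnd ℂ (τ (star a * b)) := by
  have expand : ∀ z : ℂ, τ (star (z • a + b) * (z • a + b)) =
      starRingEnd ℂ z * z * τ (star a * a) + starRingEnd ℂ z * τ (star a * b)
        + z * τ (star b * a) + τ (star b * b) := by
    intro z
    simp only [star_add, star_smul, add_mul, mul_add, smul_mul_assoc, mul_smul_comm,
      map_add, map_smul, smul_eq_mul, starRingEnd_apply, smul_smul]
    ring
  have haa := hτpos a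
  have hbb := hτpos b
  have h1 := hτpos ((1 : ℂ) • a + b)
  have hI := hτpos (Complex.I • a + b)
  rw [expand] at h1 hI
  rw [Complex.nonneg_iff] at haa hbb h1 hI
  set p := τ (star a * a)
  set q := τ (star b * b)
  set w := τ (star a * b)
  set w' := τ (star b * a)
  have e1 := h1.2
  have e2 := hI.2
  simp [Complex.ext_iff, Complex.add_im, Complex.mul_im, Complex.conj_re,
    Complex.conj_im] at e1 e2 ⊢
  constructor <;> nlinarith [haa.2, hbb.2, e1, e2]

private lemma state_cs' {A : Type*} [Ring A] [StarRing A] [Algebra ℂ A] [StarModule ℂ A]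
    (τ : A →ₗ[ℂ] ℂ) (hτpos : ∀ a : A, 0 ≤ τ (star a * a)) (a b : A) :
    ‖τ (star a * b)‖ ^ 2 ≤ (τ (star a * a)).re * (τ (star b * b)).re := by
  letI c : PreInnerProductSpace.Core ℂ A :=
    { inner := fun x y => τ (star x * y)
      conj_inner_symm := fun x y => by
        have := state_herm' τ hτpos x y
        simpa using congrArg (starRingEnd ℂ) this
      re_inner_nonneg := fun x => ((Complex.nonneg_iff).mp (hτpos x)).1
      add_left := fun x y z => by simp [star_add, add_mul]
      smul_left := fun x y r => by
        show τ (star (r • x) * y) = _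
        rw [star_smul, smul_mul_assoc, map_smul, smul_eq_mul, starRingEnd_apply] }
  letI : Inner ℂ A := InnerProductSpace.Core.toPreInner'
  have h := InnerProductSpace.Core.inner_mul_inner_self_le (𝕜 := ℂ) (F := A) a b
  have hsymm : ‖(inner ℂ b a : ℂ)‖ = ‖(inner ℂ a b : ℂ)‖ := by
    show ‖τ (star b * a)‖ = ‖τ (star a * b)‖
    rw [state_herm' τ hτpos a b]
    simp
  rw [hsymm] at h
  calc ‖τ (star a * b)‖ ^ 2 = ‖(inner ℂ a b : ℂ)‖ * ‖(inner ℂ a b : ℂ)‖ := by rw [sq]; rfl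
    _ ≤ _ := h

private lemma state_norm_le' {A : Type*}
    [NormedRing A] [StarRing A] [CStarRing A] [NormedAlgebra ℂ A]
    [CompleteSpace A] [StarModule ℂ A]
    (τ : A →ₗ[ℂ] ℂ) (hτ1 : τ 1 = 1) (hτpos : ∀ a : A, 0 ≤ τ (star a * a)) (b : A) :
    ‖τ b‖ ≤ ‖b‖ := by
  letI : CStarAlgebra A :=
    { toNormedRing := ‹_›, toStarRing := ‹_›, toCompleteSpace := ‹_›,
      toCStarRing := ‹_›, toNormedAlgebra := ‹_›, toStarModule := ‹_› }
  letI := CStarAlgebra.spectralOrder A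
  haveI := CStarAlgebra.spectralOrderedRing A
  have hcl : ∀ p, p ∈ AddSubmonoid.closure (Set.range fun s : A => star s * s) →
      0 ≤ (τ p).re := by
    intro p hp
    induction hp using AddSubmonoid.closure_induction with
    | mem x hx =>
      obtain ⟨s, rfl⟩ := hx
      exact ((Complex.nonneg_iff).mp (hτpos s)).1
    | zero => simp
    | add x y _ _ hx hy =>
      rw [map_add, Complex.add_re]; exact add_nonneg hx hy
  have mono : ∀ {c d : A}, c ≤ d → 0 ≤ (τ (d - c)).re := by
    intro c d hcd
    obtain ⟨p, hp, rfl⟩ := (StarOrderedRing.le_iff c d).mp hcd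
    simpa using hcl p hp
  have key : (τ (star b * b)).re ≤ ‖b‖ ^ 2 := by
    have hle : star b * b ≤ algebraMap ℝ A (‖b‖ ^ 2) :=
      CStarAlgebra.star_mul_le_algebraMap_norm_sq
    have := mono hle
    have halg : τ (algebraMap ℝ A (‖b‖ ^ 2)) = (‖b‖ ^ 2 : ℝ) := by
      rw [IsScalarTower.algebraMap_apply ℝ ℂ A, Algebra.algebraMap_eq_smul_one,
        map_smul, hτ1, smul_eq_mul, mul_one]
      norm_cast
    rw [map_sub, halg] at this
    simp only [Complex.sub_re, ← Complex.ofReal_pow, Complex.ofReal_re] at this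
    linarith
  have hcs := state_cs' τ hτpos 1 b
  have h1 : τ (star (1 : A) * b) = τ b := by rw [star_one, one_mul]
  have h2 : τ (star (1 : A) * (1 : A)) = 1 := by rw [star_one, one_mul, hτ1]
  rw [h1, h2] at hcs
  simp only [Complex.one_re, one_mul] at hcs
  nlinarith [norm_nonneg (τ b), norm_nonneg b]

/-- In `A = C(X) ⋊_r G` (with embedding `ι : C(X) → A` and canonical
unitaries `u s = λ_s`), let `τ` be a state with `τ|_{C(X)} = δ_x` and with
`τ|_{C*_r(G)}` invariant under conjugation. If `f ∈ C(X)`, `t ∈ G`, and for every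
`ε > 0` there are `s₁, …, s_m ∈ G` and `0 ≤ f₁, …, f_m ∈ C(X)` with `∑ f_j = 1` and
`‖∑_j f_j λ_{s_j} λ_t λ_{s_j}⁻¹‖ < ε`, then `τ(f λ_t) = 0`. -/
theorem state_vanishes_on_averaged_unitary {G X A : Type*} [Group G] [Countable G]
    [TopologicalSpace X] [CompactSpace X] [T2Space X]
    [NormedRing A] [StarRing A] [CStarRing A] [NormedAlgebra ℂ A]
    [CompleteSpace A] [StarModule ℂ A]
    (ι : C(X, ℂ) →⋆ₐ[ℂ] A) (hι : Isometry ι)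
    (u : G → A) (hu1 : u 1 = 1) (humul : ∀ s t : G, u (s * t) = u s * u t)
    (hustar : ∀ s : G, star (u s) = u s⁻¹)
    (τ : A →ₗ[ℂ] ℂ) (hτ1 : τ 1 = 1) (hτpos : ∀ a : A, 0 ≤ τ (star a * a))
    (x : X) (hτx : ∀ f : C(X, ℂ), τ (ι f) = f x)
    (hτinv : ∀ s g : G, τ (u (s * g * s⁻¹)) = τ (u g))
    (f : C(X, ℂ)) (t : G)
    (havg : ∀ ε : ℝ, 0 < ε → ∃ (m : ℕ) (s : Fin m → G) (fj : Fin m → C(X, ℂ)),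
      (∀ j, 0 ≤ fj j) ∧ (∑ j, fj j = 1) ∧
      ‖∑ j, ι (fj j) * (u (s j) * u t * u (s j)⁻¹)‖ < ε) :
    τ (ι f * u t) = 0 := by
  -- multiplicative domain: τ (ι g * c) = g x * τ c
  have md : ∀ (g : C(X, ℂ)) (c : A), τ (ι g * c) = g x * τ c := by
    intro g c
    set d : A := ι g - (g x) • 1 with hd
    have hdd : τ (d * star d) = 0 := by
      have hstar : star d = ι (star g) - (starRingEnd ℂ (g x)) • (1 : A) := by
        rw [hd, star_sub, star_smul, star_one, map_star, starRingEnd_apply]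
      have hexp : d * star d = ι g * ι (star g) - (starRingEnd ℂ (g x)) • ι g
          - (g x) • ι (star g) + ((g x) * starRingEnd ℂ (g x)) • (1 : A) := by
        rw [hd, hstar]
        simp only [sub_mul, mul_sub, smul_mul_assoc, mul_smul_comm, smul_smul,
          mul_one, one_mul]
        module
      rw [hexp, ← map_mul]
      simp only [map_add, map_sub, map_smul, hτx, hτ1, smul_eq_mul, mul_one]
      have hg1 : (g * star g) x = g x * starRingEnd ℂ (g x) := by
        rw [ContinuousMap.mul_apply, ContinuousMap.star_apply, starRingEnd_apply]
      have hg2 : (star g) x = starRingEnd ℂ (g x) := by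
        rw [ContinuousMap.star_apply, starRingEnd_apply]
      rw [hg1, hg2]
      ring
    have hcs := state_cs' τ hτpos (star d) c
    rw [star_star] at hcs
    rw [hdd] at hcs
    simp only [Complex.zero_re, zero_mul] at hcs
    have : ‖τ (d * c)‖ = 0 := by nlinarith [norm_nonneg (τ (d * c)), sq_nonneg ‖τ (d * c)‖]
    have hzero : τ (d * c) = 0 := norm_eq_zero.mp this
    have : τ (ι g * c) - g x * τ c = 0 := by
      rw [← hzero, hd]
      simp [sub_mul, smul_mul_assoc, smul_eq_mul]
    exact sub_eq_zero.mp this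
  -- τ (u t) = 0
  have hut : τ (u t) = 0 := by
    have hbound : ∀ ε : ℝ, 0 < ε → ‖τ (u t)‖ < ε := by
      intro ε hε
      obtain ⟨m, s, fj, hfj0, hfj1, hnorm⟩ := havg ε hε
      have hτsum : τ (∑ j, ι (fj j) * (u (s j) * u t * u (s j)⁻¹)) = τ (u t) := by
        rw [map_sum]
        have hterm : ∀ j, τ (ι (fj j) * (u (s j) * u t * u (s j)⁻¹))
            = (fj j) x * τ (u t) := by
          intro j
          have hcomb : u (s j) * u t * u (s j)⁻¹ = u (s j * t * (s j)⁻¹) := by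
            rw [humul (s j * t) ((s j)⁻¹), humul (s j) t]
          rw [hcomb, md (fj j) _, hτinv (s j) t]
        calc (∑ j, τ (ι (fj j) * (u (s j) * u t * u (s j)⁻¹)))
            = ∑ j, (fj j) x * τ (u t) := by
              exact Finset.sum_congr rfl fun j _ => hterm j
          _ = (∑ j, (fj j) x) * τ (u t) := by rw [Finset.sum_mul]
          _ = τ (u t) := by
              have : (∑ j, (fj j) x) = 1 := by
                have := congrArg (fun h : C(X, ℂ) => h x) hfj1
                simpa using this
              rw [this, one_mul]
      calc ‖τ (u t)‖ = ‖τ (∑ j, ι (fj j) * (u (s j) * u t * u (s j)⁻¹))‖ := by rw [hτsum]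
        _ ≤ ‖∑ j, ι (fj j) * (u (s j) * u t * u (s j)⁻¹)‖ :=
            state_norm_le' τ hτ1 hτpos _
        _ < ε := hnorm
    by_contra h
    have hpos : 0 < ‖τ (u t)‖ := norm_pos_iff.mpr h
    exact lt_irrefl _ (hbound _ hpos)
  rw [md f (u t), hut, mul_zero]
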